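/- Fix f' ∈ {f, 2f} and suppose m = p^{f'} − 1. Let (r,a,c) and (s,b,d) be two rank one data, and suppose there is a subset T ⊆ Z/fZ (the set of 'transitions') such that: for each i ∉ T one has p·c_{i−1} = c_i and p·d_{i−1} = d_i in Z/mZ, r_i = e' and s_i = 0; while for each i ∈ T one has c_i ≠ d_i, p·c_{i−1} = d_i and p·d_{i−1} = c_i in Z/mZ, r_i = e' − [c_i − d_i] and s_i = [c_i − d_i], where [x] ∈ {0,…,m−1} denotes the least non-negative residue of x ∈ Z/mZ. (This says the pair (M(r,a,c), M(s,b,d)) has maximal refined shape.) Then dim_F H = #{ i ∈ T : [d_{i−1} − c_{i−1}] < p^{f'−1} }. (This is the paper's computation of dim_F Hom(M, N[1/u]/N) for a pair of maximal refined shape; the condition [d_{i−1} − c_{i−1}] < p^{f'−1} is equivalent to the vanishing of the paper's invariant γ*_i.) -/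

import Mathlib

open PowerSeries

noncomputable section

/-- The image of `F⟦u⟧` in `F((u))`, as an `F`-subspace. -/
def PSsub (F : Type) [Field F] : Submodule F (LaurentSeries F) :=
  Submodule.span F (Set.range ⇑(algebraMap (PowerSeries F) (LaurentSeries F)))

/-- The set `H` computing `Hom(𝔐(r,a,c), 𝔐(s,b,d)[1/u]/𝔐(s,b,d))`: tuples `(μ_i)` in
`F((u))/F⟦u⟧` such that every nonzero term of `μ_i` occurs in a degree `n ≡ c_i − d_i (mod m)`
and `a_i·u^{r_i}·μ_i = b_i·u^{s_i}·φ(μ_{i−1})` in `F((u))/F⟦u⟧` for all `i`. -/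
def Hset (F : Type) [Field F] (f m : ℕ) (r s : ZMod f → ℕ) (a b : ZMod f → Fˣ)
    (c d : ZMod f → ZMod m) (φL : LaurentSeries F →+ LaurentSeries F) :
    Set (ZMod f → (LaurentSeries F ⧸ PSsub F)) :=
  {μ | ∃ x : ZMod f → LaurentSeries F,
    (∀ i, Submodule.Quotient.mk (x i) = μ i) ∧
    (∀ (i : ZMod f) (n : ℤ), n < 0 → (x i).coeff n ≠ 0 → (n : ZMod m) = c i - d i) ∧
    (∀ i : ZMod f,
      (Submodule.Quotient.mk (algebraMap (PowerSeries F) (LaurentSeries F)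
          (PowerSeries.C (a i : F) * PowerSeries.X ^ r i) * x i) :
        LaurentSeries F ⧸ PSsub F) =
      Submodule.Quotient.mk (algebraMap (PowerSeries F) (LaurentSeries F)
          (PowerSeries.C (b i : F) * PowerSeries.X ^ s i) * φL (x (i - 1))))}

namespace Stmt15

variable {F : Type} [Field F]

lemma coeff_ofPS_neg (φ : PowerSeries F) {n : ℤ} (hn : n < 0) :
    (HahnSeries.ofPowerSeries ℤ F φ).coeff n = 0 := by
  rw [HahnSeries.ofPowerSeries_apply]
  apply HahnSeries.embDomain_notin_range
  rintro ⟨k, rfl⟩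
  simp at hn
  omega

lemma mem_PSsub_iff (z : LaurentSeries F) :
    z ∈ PSsub F ↔ ∀ n : ℤ, n < 0 → z.coeff n = 0 := by
  constructor
  · intro hz
    induction hz using Submodule.span_induction with
    | mem w hw =>
      rcases hw with ⟨φ, rfl⟩
      intro n hn
      exact coeff_ofPS_neg φ hn
    | zero => intro n hn; simp
    | add w₁ w₂ _ _ h1 h2 => intro n hn; rw [HahnSeries.coeff_add, h1 n hn, h2 n hn, add_zero]
    | smul k w _ h => intro n hn; rw [HahnSeries.coeff_smul, h n hn, smul_zero]
  · intro h
    have : z = algebraMap (PowerSeries F) (LaurentSeries F)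
        (PowerSeries.mk fun k => z.coeff k) := by
      ext n
      rcases lt_or_ge n 0 with hn | hn
      · rw [h n hn, LaurentSeries.coe_algebraMap, coeff_ofPS_neg _ hn]
      · obtain ⟨k, rfl⟩ := Int.eq_ofNat_of_zero_le hn
        rw [LaurentSeries.coe_algebraMap, HahnSeries.ofPowerSeries_apply_coeff,
          PowerSeries.coeff_mk]
    rw [this]
    exact Submodule.subset_span ⟨_, rfl⟩

def coeffHom (F : Type) [Field F] (n : ℤ) : LaurentSeries F →ₗ[F] F where
  toFun z := z.coeff n
  map_add' := by intros; simp [HahnSeries.coeff_add]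
  map_smul' := by intros; simp [HahnSeries.coeff_smul]

def qcoeff (F : Type) [Field F] (n : ℤ) : (LaurentSeries F ⧸ PSsub F) →ₗ[F] F :=
  if h : n < 0 then
    Submodule.liftQ (PSsub F) (coeffHom F n) (fun z hz => (mem_PSsub_iff z).1 hz n h)
  else 0

lemma qcoeff_mk {n : ℤ} (hn : n < 0) (z : LaurentSeries F) :
    qcoeff F n (Submodule.Quotient.mk z) = z.coeff n := by
  rw [qcoeff, dif_pos hn]
  rfl

lemma single_mul_coeff (w : F) (b : ℤ) (z : LaurentSeries F) (k : ℤ) :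
    (HahnSeries.single b w * z).coeff k = w * z.coeff (k - b) := by
  have hk : k = (k - b) + b := by ring
  rw [hk, HahnSeries.coeff_single_mul_add]
  ring_nf

lemma algebraMap_CX (w : F) (n : ℕ) :
    algebraMap (PowerSeries F) (LaurentSeries F) (PowerSeries.C w * PowerSeries.X ^ n)
      = HahnSeries.single (n : ℤ) w := by
  rw [map_mul, map_pow, LaurentSeries.coe_algebraMap, HahnSeries.ofPowerSeries_C,
    HahnSeries.ofPowerSeries_X, HahnSeries.single_pow]
  rw [show HahnSeries.C (Γ := ℤ) w = HahnSeries.single (0 : ℤ) w from rfl,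
    HahnSeries.single_mul_single]
  simp

lemma coeff_CX_mul (w : F) (n : ℕ) (z : LaurentSeries F) (k : ℤ) :
    (algebraMap (PowerSeries F) (LaurentSeries F)
      (PowerSeries.C w * PowerSeries.X ^ n) * z).coeff k = w * z.coeff (k - n) := by
  rw [algebraMap_CX, single_mul_coeff]

end Stmt15


lemma Stmt15.arith_main (p m e' x q J : ℤ) (hp : 2 ≤ p) (hm : 1 ≤ m) (hme : m ≤ e')
    (hx1 : 1 ≤ x) (hxm : x < m) (hq : 0 ≤ q) (hJ : 0 ≤ J)
    (hs0 : 0 ≤ p * x - m * J) (hsm : p * x - m * J < m)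
    (hterm : 1 ≤ p * q + J) :
    -(m * (p * q + J)) - (e' - (p * x - m * J)) < -(x + m * q) := by
  by_cases hJ1 : 1 ≤ J
  · have h3 : p * x < m * J + m := by linarith
    have h2 : m * q ≤ m * q * p := le_mul_of_one_le_right (mul_nonneg (by linarith) hq)
      (by linarith)
    have h1 : m * 1 ≤ m * J := mul_le_mul_of_nonneg_left hJ1 (by linarith)
    nlinarith [h1, h2, h3]
  · have hJ0 : J = 0 := by omega
    subst hJ0
    have hqne : q ≠ 0 := by
      rintro rfl
      omega
    have hq1 : 1 ≤ q := by omega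
    have h3 : p * x < m := by linarith
    have h1 : 1 ≤ q * (p - 1) := by
      nlinarith [mul_pos (by linarith : (0:ℤ) < q) (by linarith : (0:ℤ) < p - 1)]
    have h2 : m * 1 ≤ m * (q * (p - 1)) := mul_le_mul_of_nonneg_left h1 (by linarith)
    nlinarith [h2, h3]

set_option maxHeartbeats 1600000 in
/-- Suppose `m = p^{f'} − 1` with `f' ∈ {f, 2f}` and the pair
`((r,a,c), (s,b,d))` has maximal refined shape, with set of transitions `T`.  Then
`dim_F H = #{i ∈ T : [d_{i−1} − c_{i−1}] < p^{f'−1}}` (here `[x]` denotes the least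
non-negative residue `ZMod.val x`, and the displayed condition is equivalent to the
vanishing of the invariant `γ*_i`). -/
theorem statement_15
    (p : ℕ) (hp : p.Prime) (F : Type) [Field F] [Fintype F] [CharP F p]
    (f e m : ℕ) [NeZero f] (he : 1 ≤ e) (hm1 : 1 ≤ m)
    (f' : ℕ) (hf' : f' = f ∨ f' = 2 * f) (hm : m = p ^ f' - 1)
    (e' : ℕ) (he' : e' = e * m)
    (r : ZMod f → ℕ) (a : ZMod f → Fˣ) (c : ZMod f → ZMod m)
    (hr : ∀ i, r i ≤ e') (hc : ∀ i, (p : ZMod m) * c (i - 1) = c i + (r i : ZMod m))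
    (s : ZMod f → ℕ) (b : ZMod f → Fˣ) (d : ZMod f → ZMod m)
    (hs : ∀ i, s i ≤ e') (hd : ∀ i, (p : ZMod m) * d (i - 1) = d i + (s i : ZMod m))
    (T : Finset (ZMod f))
    (hT : ∀ i : ZMod f, i ∉ T →
      (p : ZMod m) * c (i - 1) = c i ∧ (p : ZMod m) * d (i - 1) = d i ∧
        r i = e' ∧ s i = 0)
    (hT' : ∀ i ∈ T,
      c i ≠ d i ∧ (p : ZMod m) * c (i - 1) = d i ∧ (p : ZMod m) * d (i - 1) = c i ∧
        r i = e' - (c i - d i).val ∧ s i = (c i - d i).val)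
    (φL : LaurentSeries F →+ LaurentSeries F)
    (hφ1 : ∀ (x : LaurentSeries F) (k : ℤ), (φL x).coeff (p * k) = x.coeff k)
    (hφ2 : ∀ (x : LaurentSeries F) (n : ℤ), ¬(p : ℤ) ∣ n → (φL x).coeff n = 0) :
    Module.rank F ↥(Submodule.span F (Hset F f m r s a b c d φL)) =
      ((T.filter fun i => (d (i - 1) - c (i - 1)).val < p ^ (f' - 1)).card : Cardinal) := by
  classical
  haveI : NeZero m := ⟨by omega⟩
  have hp2 : 2 ≤ p := hp.two_le
  have hf1 : 1 ≤ f := Nat.pos_of_ne_zero (NeZero.ne f)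
  have hf'1 : 1 ≤ f' := by rcases hf' with h | h <;> omega
  have he'm : m ≤ e' := by
    rw [he']; exact Nat.le_mul_of_pos_left m he
  have hpf' : p ^ f' = m + 1 := by
    have h1 : 1 ≤ p ^ f' := Nat.one_le_pow _ _ (by omega)
    omega
  -- φL is F-linear on coefficients
  have hφsmul : ∀ (k : F) (x : LaurentSeries F), φL (k • x) = k • φL x := by
    intro k x
    ext n
    by_cases hpn : (p : ℤ) ∣ n
    · obtain ⟨t, rfl⟩ := hpn
      rw [hφ1, HahnSeries.coeff_smul, HahnSeries.coeff_smul, hφ1]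
    · rw [hφ2 _ _ hpn, HahnSeries.coeff_smul, hφ2 _ _ hpn, smul_zero]
  -- Hset is a submodule
  let Hsub : Submodule F (ZMod f → (LaurentSeries F ⧸ PSsub F)) :=
    { carrier := Hset F f m r s a b c d φL
      add_mem' := by
        rintro μ ν ⟨x, hx1, hx2, hx3⟩ ⟨y, hy1, hy2, hy3⟩
        refine ⟨x + y, fun i => ?_, fun i n hn hne => ?_, fun i => ?_⟩
        · simp only [Pi.add_apply, Submodule.Quotient.mk_add, hx1, hy1]
        · by_cases hcx : (x i).coeff n = 0
          · have : (y i).coeff n ≠ 0 := by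
              intro h; apply hne; simp [HahnSeries.coeff_add, hcx, h]
            exact hy2 i n hn this
          · exact hx2 i n hn hcx
        · simp only [Pi.add_apply, mul_add, map_add, Submodule.Quotient.mk_add]
          rw [hx3 i, hy3 i]
      zero_mem' := by
        refine ⟨0, fun i => rfl, fun i n hn hne => absurd rfl hne, fun i => ?_⟩
        simp
      smul_mem' := by
        rintro k μ ⟨x, hx1, hx2, hx3⟩
        refine ⟨k • x, fun i => ?_, fun i n hn hne => ?_, fun i => ?_⟩
        · simp only [Pi.smul_apply, Submodule.Quotient.mk_smul, hx1]
        · apply hx2 i n hn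
          intro h
          apply hne
          simp [HahnSeries.coeff_smul, h]
        · simp only [Pi.smul_apply, hφsmul]
          rw [← HahnSeries.C_mul_eq_smul, mul_left_comm, HahnSeries.C_mul_eq_smul,
            Submodule.Quotient.mk_smul, hx3 i, ← Submodule.Quotient.mk_smul,
            ← HahnSeries.C_mul_eq_smul, mul_left_comm, HahnSeries.C_mul_eq_smul] }
  have hspan : Submodule.span F (Hset F f m r s a b c d φL) = Hsub := Submodule.span_eq Hsub
  -- the coefficient equations, forward and converse
  have hE : ∀ x : ZMod f → LaurentSeries F, ∀ i : ZMod f,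
      ((Submodule.Quotient.mk (algebraMap (PowerSeries F) (LaurentSeries F)
          (PowerSeries.C (a i : F) * PowerSeries.X ^ r i) * x i) :
        LaurentSeries F ⧸ PSsub F) =
      Submodule.Quotient.mk (algebraMap (PowerSeries F) (LaurentSeries F)
          (PowerSeries.C (b i : F) * PowerSeries.X ^ s i) * φL (x (i - 1)))) →
      ∀ k : ℤ, k < 0 →
        (a i : F) * (x i).coeff (k - (r i : ℤ)) =
          (b i : F) * (φL (x (i - 1))).coeff (k - (s i : ℤ)) := by
    intro x i h k hk
    rw [Submodule.Quotient.eq] at h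
    have := (Stmt15.mem_PSsub_iff _).1 h k hk
    rw [HahnSeries.coeff_sub, sub_eq_zero, Stmt15.coeff_CX_mul, Stmt15.coeff_CX_mul] at this
    exact this
  have hE' : ∀ x : ZMod f → LaurentSeries F, ∀ i : ZMod f,
      (∀ k : ℤ, k < 0 →
        (a i : F) * (x i).coeff (k - (r i : ℤ)) =
          (b i : F) * (φL (x (i - 1))).coeff (k - (s i : ℤ))) →
      ((Submodule.Quotient.mk (algebraMap (PowerSeries F) (LaurentSeries F)
          (PowerSeries.C (a i : F) * PowerSeries.X ^ r i) * x i) :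
        LaurentSeries F ⧸ PSsub F) =
      Submodule.Quotient.mk (algebraMap (PowerSeries F) (LaurentSeries F)
          (PowerSeries.C (b i : F) * PowerSeries.X ^ s i) * φL (x (i - 1)))) := by
    intro x i h
    rw [Submodule.Quotient.eq]
    rw [Stmt15.mem_PSsub_iff]
    intro k hk
    rw [HahnSeries.coeff_sub, sub_eq_zero, Stmt15.coeff_CX_mul, Stmt15.coeff_CX_mul]
    exact h k hk
  -- the filtered set and the comparison map
  set S := T.filter (fun i => (d (i - 1) - c (i - 1)).val < p ^ (f' - 1)) with hS
  let Φ : (ZMod f → (LaurentSeries F ⧸ PSsub F)) →ₗ[F] (↥S → F) :=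
    LinearMap.pi fun σ =>
      (Stmt15.qcoeff F (-(((d (σ.1 - 1) - c (σ.1 - 1)).val : ℤ)))).comp
        (LinearMap.proj (σ.1 - 1))
  have hΦapp : ∀ (w : ZMod f → (LaurentSeries F ⧸ PSsub F)) (τ : {x // x ∈ S}),
      Φ w τ = Stmt15.qcoeff F (-(((d (τ.1 - 1) - c (τ.1 - 1)).val : ℤ))) (w (τ.1 - 1)) :=
    fun w τ => rfl
  -- facts about transitions
  have hδT : ∀ i1 ∈ T, c i1 - d i1 = (p : ZMod m) * (d (i1 - 1) - c (i1 - 1)) := by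
    intro i1 h
    obtain ⟨_, hpc, hpd, _, _⟩ := hT' i1 h
    rw [← hpc, ← hpd, ← mul_sub]
  have hne0 : ∀ i1 ∈ T, d (i1 - 1) - c (i1 - 1) ≠ 0 := by
    intro i1 h hz
    obtain ⟨hcd, _, _, _, _⟩ := hT' i1 h
    apply hcd
    have h2 := hδT i1 h
    rw [hz, mul_zero, sub_eq_zero] at h2
    exact h2
  have hwcast : ∀ j : ZMod f, (((d j - c j).val : ℕ) : ZMod m) = d j - c j := by
    intro j; rw [ZMod.natCast_val, ZMod.cast_id]
  have hSfacts : ∀ i1 ∈ S, 1 ≤ (d (i1 - 1) - c (i1 - 1)).val ∧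
      p * (d (i1 - 1) - c (i1 - 1)).val < m ∧
      s i1 = p * (d (i1 - 1) - c (i1 - 1)).val ∧
      (d (i1 - 1) - c (i1 - 1)).val ≤ r (i1 - 1) := by
    intro i1 hi1
    have hi1T : i1 ∈ T := (Finset.mem_filter.1 hi1).1
    have hlt : (d (i1 - 1) - c (i1 - 1)).val < p ^ (f' - 1) := (Finset.mem_filter.1 hi1).2
    set x' := (d (i1 - 1) - c (i1 - 1)).val with hx'
    have hx1 : 1 ≤ x' :=
      Nat.pos_of_ne_zero (fun h => hne0 i1 hi1T ((ZMod.val_eq_zero _).1 h))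
    have hx'm : x' < m := ZMod.val_lt _
    have hpx : p * x' < m := by
      have h1 : x' + 1 ≤ p ^ (f' - 1) := hlt
      have h2 : p * (x' + 1) ≤ p * p ^ (f' - 1) := Nat.mul_le_mul_left p h1
      have h3 : p * p ^ (f' - 1) = p ^ f' := by
        rw [← pow_succ']
        congr 1
        omega
      have h4 : p * x' + p ≤ p ^ f' := by
        calc p * x' + p = p * (x' + 1) := by ring
        _ ≤ p * p ^ (f' - 1) := h2
        _ = p ^ f' := h3
      omega
    refine ⟨hx1, hpx, ?_, ?_⟩
    · obtain ⟨_, _, _, _, hse⟩ := hT' i1 hi1T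
      rw [hse, hδT i1 hi1T]
      have h4 : (p : ZMod m) * (d (i1 - 1) - c (i1 - 1)) = ((p * x' : ℕ) : ZMod m) := by
        rw [← hwcast (i1 - 1), ← hx']
        push_cast
        ring
      rw [h4, ZMod.val_cast_of_lt hpx]
    · by_cases hmem : i1 - 1 ∈ T
      · obtain ⟨_, _, _, hr1, _⟩ := hT' _ hmem
        have hvneg : (c (i1 - 1) - d (i1 - 1)) = -(d (i1 - 1) - c (i1 - 1)) := by ring
        have h5 : (c (i1 - 1) - d (i1 - 1)).val = m - x' := by
          rw [hvneg, ZMod.neg_val, if_neg (hne0 i1 hi1T)]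
        rw [hr1, h5]
        omega
      · obtain ⟨_, _, hr1, _⟩ := hT _ hmem
        rw [hr1]
        omega
  -- basis elements
  have hbasis : ∀ σ : {x // x ∈ S}, ∃ w ∈ Hsub, Φ w = Pi.single σ (1 : F) := by
    rintro ⟨i1, hi1⟩
    obtain ⟨hx1, hpx, hsx, hxr⟩ := hSfacts i1 hi1
    have hi1T : i1 ∈ T := (Finset.mem_filter.1 hi1).1
    set x' := (d (i1 - 1) - c (i1 - 1)).val with hx'
    set X : ZMod f → LaurentSeries F :=
      fun j => if j = i1 - 1 then HahnSeries.single (-(x' : ℤ)) (1 : F) else 0 with hX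
    have hmem : (fun j => (Submodule.Quotient.mk (X j) : LaurentSeries F ⧸ PSsub F)) ∈ Hsub := by
      refine ⟨X, fun j => rfl, ?_, ?_⟩
      · intro j n hn hnz
        by_cases hj : j = i1 - 1
        · subst hj
          rw [hX] at hnz
          simp only [if_pos rfl] at hnz
          have hn' : n = -(x' : ℤ) := by
            by_contra hne
            exact hnz (HahnSeries.coeff_single_of_ne hne)
          subst hn'
          have hw := hwcast (i1 - 1)
          rw [← hx'] at hw
          push_cast
          rw [hw]
          ring
        · rw [hX] at hnz
          simp only [if_neg hj] at hnz
          simp at hnz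
      · intro i
        apply hE' X i
        intro k hk
        have hRHS : (φL (X (i - 1))).coeff (k - (s i : ℤ)) = 0 := by
          by_cases hji : i = i1
          · have hii : i - 1 = i1 - 1 := by rw [hji]
            rw [hii, hX]
            simp only [if_pos rfl]
            by_cases hdvd : (p : ℤ) ∣ (k - (s i : ℤ))
            · obtain ⟨t, ht⟩ := hdvd
              rw [ht, hφ1]
              apply HahnSeries.coeff_single_of_ne
              intro hta
              subst hta
              rw [hji, hsx] at ht
              push_cast at ht
              linarith
            · exact hφ2 _ _ hdvd
          · have hne : i - 1 ≠ i1 - 1 := fun h => hji (by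
              have := sub_left_inj.1 h
              exact this)
            rw [hX]
            simp only [if_neg hne, map_zero, HahnSeries.coeff_zero]
        rw [hRHS, mul_zero]
        by_cases hj : i = i1 - 1
        · subst hj
          rw [hX]
          simp only [eq_self_iff_true, if_true]
          rw [HahnSeries.coeff_single_of_ne, mul_zero]
          have : (x' : ℤ) ≤ (r (i1 - 1) : ℤ) := by exact_mod_cast hxr
          omega
        · rw [hX]
          simp only [if_neg hj, HahnSeries.coeff_zero, mul_zero]
    refine ⟨_, hmem, ?_⟩
    funext τ
    rw [hΦapp]
    have hτ1 : 1 ≤ (d (τ.1 - 1) - c (τ.1 - 1)).val := (hSfacts τ.1 τ.2).1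
    rw [Stmt15.qcoeff_mk (by omega : -(((d (τ.1 - 1) - c (τ.1 - 1)).val : ℤ)) < 0)]
    by_cases hτσ : τ = ⟨i1, hi1⟩
    · subst hτσ
      simp only [hX, eq_self_iff_true, if_true]
      rw [← hx', HahnSeries.coeff_single_same, Pi.single_eq_same]
    · have hne : τ.1 ≠ i1 := fun h => hτσ (Subtype.ext h)
      have hne' : τ.1 - 1 ≠ i1 - 1 := fun h => hne (sub_left_inj.1 h)
      simp only [hX]
      rw [if_neg hne', HahnSeries.coeff_zero, Pi.single_eq_of_ne hτσ]
  have hppow : p * p ^ (f' - 1) = p ^ f' := by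
    rw [← pow_succ']
    congr 1
    omega
  have hker : ∀ v : Hsub, Φ v.1 = 0 → v = 0 := by
    rintro ⟨v, hv⟩ hΦ0
    obtain ⟨x, hx1, hx2, hx3⟩ := hv
    have hm0 : (0 : ℤ) ≤ (m : ℤ) := by positivity
    have hmZ : (1 : ℤ) ≤ (m : ℤ) := by exact_mod_cast hm1
    have he'Z : (m : ℤ) ≤ (e' : ℤ) := by exact_mod_cast he'm
    have hp2Z : (2 : ℤ) ≤ (p : ℤ) := by exact_mod_cast hp2
    have hzero : ∀ (n : ℤ), n < 0 → ∀ i, (x i).coeff n = 0 := by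
      by_contra hcon
      push_neg at hcon
      have hbdd : ∃ bnd : ℤ, ∀ z : ℤ, (z < 0 ∧ ∃ i, (x i).coeff z ≠ 0) → bnd ≤ z := by
        refine ⟨(Finset.univ.image fun i : ZMod f => (x i).order).min'
          (Finset.Nonempty.image (Finset.univ_nonempty) _), ?_⟩
        rintro z ⟨hz, i, hzi⟩
        refine le_trans (Finset.min'_le _ _ (Finset.mem_image_of_mem _ (Finset.mem_univ i))) ?_
        exact HahnSeries.order_le_of_coeff_ne_zero hzi
      have hinh : ∃ z : ℤ, (z < 0 ∧ ∃ i, (x i).coeff z ≠ 0) := by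
        obtain ⟨n, hn, i, hi⟩ := hcon
        exact ⟨n, hn, i, hi⟩
      obtain ⟨n0, ⟨hn0, i0, hne⟩, hleast⟩ := Int.exists_least_of_bdd hbdd hinh
      obtain ⟨i, hidef⟩ : ∃ i : ZMod f, i = i0 + 1 := ⟨_, rfl⟩
      have hii : i - 1 = i0 := by rw [hidef]; ring
      have hcon0 : ((n0 : ℤ) : ZMod m) = c i0 - d i0 := hx2 i0 n0 hn0 hne
      by_cases hiT : i ∈ T
      · obtain ⟨hcd, hpc, hpd, hre, hse⟩ := hT' i hiT
        rw [hii] at hpc hpd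
        have hδ : c i - d i = (p : ZMod m) * (d i0 - c i0) := by
          rw [← hpc, ← hpd, ← mul_sub]
        have hδne : d i0 - c i0 ≠ 0 := by
          intro hz
          apply hcd
          rw [hz, mul_zero, sub_eq_zero] at hδ
          exact hδ
        set x' := (d i0 - c i0).val with hx'def
        have hx'1 : 1 ≤ x' := Nat.pos_of_ne_zero fun h => hδne ((ZMod.val_eq_zero _).1 h)
        have hx'm : x' < m := ZMod.val_lt _
        have hx'Z : (x' : ℤ) < (m : ℤ) := by exact_mod_cast hx'm
        have hx'Z1 : (1 : ℤ) ≤ (x' : ℤ) := by exact_mod_cast hx'1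
        have hw : ((x' : ℕ) : ZMod m) = d i0 - c i0 := by
          rw [hx'def, ZMod.natCast_val, ZMod.cast_id]
        have hwsi : ((s i : ℕ) : ZMod m) = c i - d i := by
          rw [hse, ZMod.natCast_val, ZMod.cast_id]
        have hsival : (s i : ℤ) < (m : ℤ) := by
          have := hse ▸ ZMod.val_lt (c i - d i)
          exact_mod_cast this
        have hsipos : (0 : ℤ) ≤ (s i : ℤ) := Int.natCast_nonneg _
        have hdvd1 : (m : ℤ) ∣ (-n0 - (x' : ℤ)) := by
          have hcast : ((-n0 - (x' : ℤ) : ℤ) : ZMod m) = 0 := by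
            push_cast
            rw [hcon0, hw]
            ring
          exact (ZMod.intCast_zmod_eq_zero_iff_dvd _ _).1 hcast
        obtain ⟨q, hq⟩ := hdvd1
        have hq0 : (0 : ℤ) ≤ q := by
          by_contra hq'
          push_neg at hq'
          have h1 : q ≤ -1 := by omega
          have h2 : (m : ℤ) * q ≤ (m : ℤ) * (-1) := by
            apply mul_le_mul_of_nonneg_left h1 hm0
          have h3 : (m : ℤ) * q = -n0 - x' := hq.symm
          linarith
        have hdvd2 : (m : ℤ) ∣ ((p : ℤ) * (x' : ℤ) - (s i : ℤ)) := by
          have hcast : (((p : ℤ) * (x' : ℤ) - (s i : ℤ) : ℤ) : ZMod m) = 0 := by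
            push_cast
            rw [hw, hwsi, hδ]
            ring
          exact (ZMod.intCast_zmod_eq_zero_iff_dvd _ _).1 hcast
        obtain ⟨J, hJ⟩ := hdvd2
        have hJ0 : (0 : ℤ) ≤ J := by
          by_contra hJ'
          push_neg at hJ'
          have h1 : J ≤ -1 := by omega
          have h2 : (m : ℤ) * J ≤ (m : ℤ) * (-1) := by
            apply mul_le_mul_of_nonneg_left h1 hm0
          have h3 : (m : ℤ) * J = (p : ℤ) * x' - s i := hJ.symm
          have h4 : (0 : ℤ) ≤ (p : ℤ) * x' := by positivity
          linarith
        have hs_eq : (s i : ℤ) = (p : ℤ) * x' - (m : ℤ) * J := by linarith [hJ]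
        have hn0eq : n0 = -((x' : ℤ) + (m : ℤ) * q) := by linarith [hq]
        have hrn : r i = e' - s i := by rw [hre, hse]
        have hre' : (r i : ℤ) = (e' : ℤ) - (s i : ℤ) := by
          rw [hrn]
          push_cast [Nat.cast_sub (hs i)]
          ring
        by_cases hterm : q = 0 ∧ J = 0
        · obtain ⟨hq', hJ'⟩ := hterm
          have hn0x : n0 = -(x' : ℤ) := by rw [hn0eq, hq']; ring
          have hsx : (s i : ℤ) = (p : ℤ) * x' := by rw [hs_eq, hJ']; ring
          have hpxm : p * x' < m := by
            have : ((p * x' : ℕ) : ℤ) < (m : ℤ) := by push_cast; linarith [hsival, hsx]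
            exact_mod_cast this
          have hxlt : x' < p ^ (f' - 1) := by
            apply Nat.lt_of_mul_lt_mul_left (a := p)
            rw [hppow]
            omega
          have hiS : i ∈ S := by
            rw [hS]
            refine Finset.mem_filter.2 ⟨hiT, ?_⟩
            rw [hii]
            exact hxlt
          have hval := congrFun hΦ0 ⟨i, hiS⟩
          rw [hΦapp] at hval
          simp only [hii] at hval
          rw [← hx1 i0, Stmt15.qcoeff_mk (by omega : -((x' : ℤ)) < 0)] at hval
          apply hne
          rw [hn0x]
          simpa using hval
        · have hterm' : (1 : ℤ) ≤ (p : ℤ) * q + J := by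
            by_cases hq' : q = 0
            · subst hq'
              simp only [mul_zero, zero_add]
              have : J ≠ 0 := fun h => hterm ⟨rfl, h⟩
              omega
            · have hq1 : (1 : ℤ) ≤ q := by omega
              have : (1 : ℤ) * 1 ≤ (p : ℤ) * q := by
                apply mul_le_mul (by linarith) hq1 (by norm_num) (by linarith)
              linarith
          obtain ⟨k, hkdef⟩ : ∃ k : ℤ, k = (p : ℤ) * n0 + (s i : ℤ) := ⟨_, rfl⟩
          have hk : k = -((m : ℤ) * ((p : ℤ) * q + J)) := by
            rw [hkdef, hn0eq, hs_eq]
            ring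
          have hklt : k < 0 := by
            have h1 : (m : ℤ) * 1 ≤ (m : ℤ) * ((p : ℤ) * q + J) := by
              apply mul_le_mul_of_nonneg_left hterm' hm0
            rw [hk]
            linarith
          have heq := hE x i (hx3 i) k hklt
          rw [hii] at heq
          have hks : k - (s i : ℤ) = (p : ℤ) * n0 := by rw [hkdef]; ring
          rw [hks, hφ1] at heq
          have hbne : (b i : F) ≠ 0 := Units.ne_zero _
          have hcoeffne : (x i).coeff (k - (r i : ℤ)) ≠ 0 := by
            intro h0
            rw [h0, mul_zero] at heq
            exact hne ((mul_eq_zero.1 heq.symm).resolve_left hbne)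
          have hrpos : (0 : ℤ) ≤ (r i : ℤ) := Int.natCast_nonneg _
          have hmin := hleast (k - (r i : ℤ)) ⟨by omega, i, hcoeffne⟩
          -- now derive a contradiction : k - r i < n0
          have hmq0 : (0 : ℤ) ≤ (m : ℤ) * q := mul_nonneg hm0 hq0
          have hcontra : k - (r i : ℤ) < n0 := by
            rw [hk, hre', hs_eq, hn0eq]
            exact Stmt15.arith_main (p : ℤ) (m : ℤ) (e' : ℤ) (x' : ℤ) q J hp2Z hmZ he'Z
              hx'Z1 hx'Z hq0 hJ0 (by linarith [hsipos, hs_eq]) (by linarith [hsival, hs_eq])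
              hterm'
          omega
      · obtain ⟨_, _, hre, hse⟩ := hT i hiT
        obtain ⟨k, hkdef⟩ : ∃ k : ℤ, k = (p : ℤ) * n0 + (s i : ℤ) := ⟨_, rfl⟩
        have hkval : k = (p : ℤ) * n0 := by rw [hkdef, hse]; simp
        have hklt : k < 0 := by
          rw [hkval]
          have : (p : ℤ) * n0 ≤ 1 * n0 := by
            apply mul_le_mul_of_nonpos_right (by linarith) (by omega)
          linarith
        have heq := hE x i (hx3 i) k hklt
        rw [hii] at heq
        have hks : k - (s i : ℤ) = (p : ℤ) * n0 := by rw [hkdef]; ring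
        rw [hks, hφ1] at heq
        have hbne : (b i : F) ≠ 0 := Units.ne_zero _
        have hcoeffne : (x i).coeff (k - (r i : ℤ)) ≠ 0 := by
          intro h0
          rw [h0, mul_zero] at heq
          exact hne ((mul_eq_zero.1 heq.symm).resolve_left hbne)
        have hrpos : (0 : ℤ) ≤ (r i : ℤ) := Int.natCast_nonneg _
        have hmin := hleast (k - (r i : ℤ)) ⟨by omega, i, hcoeffne⟩
        have hreZ : (r i : ℤ) = (e' : ℤ) := by exact_mod_cast hre
        have he'Z : (1 : ℤ) ≤ (e' : ℤ) := by
          have : 1 ≤ e' := le_trans hm1 he'm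
          exact_mod_cast this
        have hcontra : k - (r i : ℤ) < n0 := by
          rw [hkval, hreZ]
          have : (p : ℤ) * n0 ≤ 1 * n0 := by
            apply mul_le_mul_of_nonpos_right (by linarith) (by omega)
          linarith
        omega
    apply Subtype.ext
    funext i
    show v i = 0
    rw [← hx1 i, Submodule.Quotient.mk_eq_zero]
    exact (Stmt15.mem_PSsub_iff _).2 (fun n hn => hzero n hn i)
  have hsurj : Function.Surjective ⇑(Φ.domRestrict Hsub) := by
    intro g
    choose W hWmem hWval using hbasis
    refine ⟨⟨∑ σ : {x // x ∈ S}, g σ • W σ,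
      Submodule.sum_mem _ (fun σ _ => Submodule.smul_mem _ _ (hWmem σ))⟩, ?_⟩
    have h1 : Φ (∑ σ : {x // x ∈ S}, g σ • W σ) = ∑ σ : {x // x ∈ S}, g σ • Φ (W σ) := by
      rw [map_sum]
      simp_rw [map_smul]
    rw [LinearMap.domRestrict_apply, h1]
    simp_rw [hWval]
    have h2 : ∀ σ : {x // x ∈ S}, g σ • (Pi.single σ (1 : F) : {x // x ∈ S} → F)
        = (Pi.single σ (g σ) : {x // x ∈ S} → F) := by
      intro σ
      rw [← Pi.single_smul, smul_eq_mul, mul_one]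
    simp_rw [h2]
    exact Finset.univ_sum_single g
  have hinj : Function.Injective ⇑(Φ.domRestrict Hsub) := by
    intro v w hvw
    have h0 : Φ.domRestrict Hsub (v - w) = 0 := by
      rw [map_sub, hvw, sub_self]
    have := hker (v - w) h0
    exact sub_eq_zero.1 (by exact_mod_cast congrArg Subtype.val this)
  rw [hspan]
  rw [LinearEquiv.rank_eq (LinearEquiv.ofBijective (Φ.domRestrict Hsub) ⟨hinj, hsurj⟩)]
  rw [rank_fun']
  rw [Fintype.card_coe]
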